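/- Two matrices A, B ∈ M_n(ℂ) satisfy AB* = A*B = 0 if and only if there exist unitary matrices U, V ∈ M_n(ℂ) such that UAV = diag(a_1,...,a_n) and UBV = diag(b_1,...,b_n) with all a_i, b_i ≥ 0 and a_i·b_i = 0 for every i. -/

import Mathlib

open Matrix Kronecker

noncomputable def svals {ι : Type*} [Fintype ι] [DecidableEq ι]
    (A : Matrix ι ι ℂ) : ι → ℝ :=
  fun i => Real.sqrt ((Matrix.isHermitian_conjTranspose_mul_self A).eigenvalues i)

noncomputable def kyFan {ι : Type*} [Fintype ι] [DecidableEq ι]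
    (k : ℕ) (A : Matrix ι ι ℂ) : ℝ :=
  sSup {x : ℝ | ∃ s : Finset ι, s.card = k ∧ x = ∑ i ∈ s, svals A i}

noncomputable def schattenNorm {ι : Type*} [Fintype ι] [DecidableEq ι]
    (p : ℝ) (A : Matrix ι ι ℂ) : ℝ :=
  (∑ i, svals A i ^ p) ^ (1 / p)

noncomputable def specNorm {ι : Type*} [Fintype ι] [DecidableEq ι]
    (A : Matrix ι ι ℂ) : ℝ :=
  sSup (Set.range (svals A))

section Aux
open ComplexOrder
variable {n : ℕ}


lemma dp_aux (A B : Matrix (Fin n) (Fin n) ℂ) (x y : Fin n → ℂ) :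
    star (A *ᵥ x) ⬝ᵥ (B *ᵥ y) = star x ⬝ᵥ ((Aᴴ * B) *ᵥ y) := by
  rw [star_mulVec, dotProduct_mulVec, vecMul_vecMul, ← dotProduct_mulVec]

lemma psd_kill {P : Matrix (Fin n) (Fin n) ℂ} (hP : P.PosSemidef) (v : Fin n → ℂ)
    (c : ℝ) (hc : c ≤ 0) (h : P *ᵥ (P *ᵥ v) = (c : ℂ) • (P *ᵥ v)) : P *ᵥ v = 0 := by
  have h1 : star (P *ᵥ v) ⬝ᵥ (P *ᵥ v) = (c : ℂ) * (star v ⬝ᵥ (P *ᵥ v)) := by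
    calc star (P *ᵥ v) ⬝ᵥ (P *ᵥ v) = star v ⬝ᵥ ((Pᴴ * P) *ᵥ v) := dp_aux P P v v
    _ = star v ⬝ᵥ (P *ᵥ (P *ᵥ v)) := by rw [hP.1, ← mulVec_mulVec]
    _ = star v ⬝ᵥ ((c:ℂ) • (P *ᵥ v)) := by rw [h]
    _ = (c : ℂ) * (star v ⬝ᵥ (P *ᵥ v)) := by rw [dotProduct_smul]; rfl
  have h2 : (0:ℂ) ≤ star v ⬝ᵥ (P *ᵥ v) := hP.dotProduct_mulVec_nonneg v
  have h3 : (0:ℂ) ≤ star (P *ᵥ v) ⬝ᵥ (P *ᵥ v) := dotProduct_star_self_nonneg _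
  have hcC : (c : ℂ) ≤ 0 := by exact_mod_cast hc
  have h4 : star (P *ᵥ v) ⬝ᵥ (P *ᵥ v) ≤ 0 := by
    rw [h1]; exact mul_nonpos_of_nonpos_of_nonneg hcC h2
  exact dotProduct_star_self_eq_zero.mp (le_antisymm h4 h3)

lemma aux_eigen_split (A B : Matrix (Fin n) (Fin n) ℂ)
    (h1 : A * Bᴴ = 0) (h2 : Aᴴ * B = 0)
    (hM : (Aᴴ * A - Bᴴ * B).IsHermitian) (j : Fin n) :
    (Aᴴ * A) *ᵥ ⇑(hM.eigenvectorBasis j)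
        = ((max (hM.eigenvalues j) 0 : ℝ) : ℂ) • ⇑(hM.eigenvectorBasis j) ∧
      (Bᴴ * B) *ᵥ ⇑(hM.eigenvectorBasis j)
        = ((max (-hM.eigenvalues j) 0 : ℝ) : ℂ) • ⇑(hM.eigenvectorBasis j) := by
  have hHpsd : (Aᴴ * A).PosSemidef := posSemidef_conjTranspose_mul_self A
  have hKpsd : (Bᴴ * B).PosSemidef := posSemidef_conjTranspose_mul_self B
  have hHK : (Aᴴ * A) * (Bᴴ * B) = 0 := by
    rw [Matrix.mul_assoc, ← Matrix.mul_assoc A Bᴴ B, h1, Matrix.zero_mul, Matrix.mul_zero]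
  have h1' : B * Aᴴ = 0 := by
    have := congrArg conjTranspose h1; simpa using this
  have hKH : (Bᴴ * B) * (Aᴴ * A) = 0 := by
    rw [Matrix.mul_assoc, ← Matrix.mul_assoc B Aᴴ A, h1', Matrix.zero_mul, Matrix.mul_zero]
  have v : Fin n → ℂ := ⇑(hM.eigenvectorBasis j)
  generalize hvdef : (⇑(hM.eigenvectorBasis j) : Fin n → ℂ) = v
  generalize hlamdef : hM.eigenvalues j = lam
  have base := hM.mulVec_eigenvectorBasis j
  rw [hvdef, hlamdef] at base
  have hMv : (Aᴴ * A) *ᵥ v - (Bᴴ * B) *ᵥ v = (lam : ℂ) • v := by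
    rw [← sub_mulVec, base]
    funext i; simp [Complex.real_smul]
  rcases le_total 0 lam with hl | hl
  · have e1 : (Bᴴ * B) *ᵥ ((Aᴴ * A) *ᵥ v) = 0 := by
      rw [mulVec_mulVec, hKH, zero_mulVec]
    have e2 := congrArg (fun x => (Bᴴ * B) *ᵥ x) hMv
    simp only [mulVec_sub, mulVec_smul, e1, zero_sub] at e2
    have hz : (Bᴴ * B) *ᵥ ((Bᴴ * B) *ᵥ v) = ((-lam : ℝ) : ℂ) • ((Bᴴ * B) *ᵥ v) := by
      push_cast
      rw [neg_smul, ← e2, neg_neg]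
    have hKv : (Bᴴ * B) *ᵥ v = 0 := psd_kill hKpsd v (-lam) (by linarith) hz
    have hHv : (Aᴴ * A) *ᵥ v = (lam : ℂ) • v := by rw [← hMv, hKv, sub_zero]
    refine ⟨?_, ?_⟩
    · rw [hHv, max_eq_left hl]
    · rw [hKv, max_eq_right (by linarith), Complex.ofReal_zero, zero_smul]
  · have e1 : (Aᴴ * A) *ᵥ ((Bᴴ * B) *ᵥ v) = 0 := by
      rw [mulVec_mulVec, hHK, zero_mulVec]
    have e2 := congrArg (fun x => (Aᴴ * A) *ᵥ x) hMv
    simp only [mulVec_sub, mulVec_smul, e1, sub_zero] at e2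
    have hHv : (Aᴴ * A) *ᵥ v = 0 := psd_kill hHpsd v lam hl e2
    have hKv : (Bᴴ * B) *ᵥ v = ((-lam : ℝ) : ℂ) • v := by
      have : (Bᴴ * B) *ᵥ v = (Aᴴ * A) *ᵥ v - (lam : ℂ) • v := by
        rw [← hMv, sub_sub_cancel]
      rw [this, hHv, zero_sub]; push_cast; rw [neg_smul]
    refine ⟨?_, ?_⟩
    · rw [hHv, max_eq_right hl, Complex.ofReal_zero, zero_smul]
    · rw [hKv, max_eq_left (by linarith)]

lemma aux_forward (A B : Matrix (Fin n) (Fin n) ℂ)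
    (h1 : A * Bᴴ = 0) (h2 : Aᴴ * B = 0)
    (hM : (Aᴴ * A - Bᴴ * B).IsHermitian)
    (aux_eigen_split : ∀ j : Fin n,
      (Aᴴ * A) *ᵥ ⇑(hM.eigenvectorBasis j)
          = ((max (hM.eigenvalues j) 0 : ℝ) : ℂ) • ⇑(hM.eigenvectorBasis j) ∧
        (Bᴴ * B) *ᵥ ⇑(hM.eigenvectorBasis j)
          = ((max (-hM.eigenvalues j) 0 : ℝ) : ℂ) • ⇑(hM.eigenvectorBasis j)) :
    ∃ U ∈ Matrix.unitaryGroup (Fin n) ℂ, ∃ V ∈ Matrix.unitaryGroup (Fin n) ℂ,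
      ∃ a b : Fin n → ℝ,
        (∀ i, 0 ≤ a i) ∧ (∀ i, 0 ≤ b i) ∧ (∀ i, a i * b i = 0) ∧
        U * A * V = Matrix.diagonal (fun i => (a i : ℂ)) ∧
        U * B * V = Matrix.diagonal (fun i => (b i : ℂ)) := by
  classical
  set v : Fin n → Fin n → ℂ := fun j => ⇑(hM.eigenvectorBasis j) with hv
  set a : Fin n → ℝ := fun j => Real.sqrt (max (hM.eigenvalues j) 0) with ha
  set b : Fin n → ℝ := fun j => Real.sqrt (max (-hM.eigenvalues j) 0) with hb
  have ha0 : ∀ j, 0 ≤ a j := fun j => Real.sqrt_nonneg _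
  have hb0 : ∀ j, 0 ≤ b j := fun j => Real.sqrt_nonneg _
  have hasq : ∀ j, (a j : ℝ) ^ 2 = max (hM.eigenvalues j) 0 := fun j =>
    Real.sq_sqrt (le_max_right _ _)
  have hbsq : ∀ j, (b j : ℝ) ^ 2 = max (-hM.eigenvalues j) 0 := fun j =>
    Real.sq_sqrt (le_max_right _ _)
  have hab : ∀ j, a j * b j = 0 := by
    intro j
    rcases le_total 0 (hM.eigenvalues j) with h | h
    · have : b j = 0 := by rw [hb]; simp; linarith
      rw [this, mul_zero]
    · have : a j = 0 := by rw [ha]; simp; linarith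
      rw [this, zero_mul]
  have hHv : ∀ j, (Aᴴ * A) *ᵥ v j = ((a j ^ 2 : ℝ) : ℂ) • v j := by
    intro j; rw [hasq]; exact (aux_eigen_split j).1
  have hKv : ∀ j, (Bᴴ * B) *ᵥ v j = ((b j ^ 2 : ℝ) : ℂ) • v j := by
    intro j; rw [hbsq]; exact (aux_eigen_split j).2
  have ortho_v : ∀ i j, star (v i) ⬝ᵥ v j = if i = j then 1 else 0 := by
    intro i j
    have := orthonormal_iff_ite.mp hM.eigenvectorBasis.orthonormal i j
    rwa [EuclideanSpace.inner_eq_star_dotProduct, dotProduct_comm] at this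
  have dAA : ∀ i j, star (A *ᵥ v i) ⬝ᵥ (A *ᵥ v j)
      = ((a j ^ 2 : ℝ) : ℂ) * (if i = j then 1 else 0) := by
    intro i j
    rw [dp_aux, hHv j, dotProduct_smul, ortho_v i j, smul_eq_mul]
  have dBB : ∀ i j, star (B *ᵥ v i) ⬝ᵥ (B *ᵥ v j)
      = ((b j ^ 2 : ℝ) : ℂ) * (if i = j then 1 else 0) := by
    intro i j
    rw [dp_aux, hKv j, dotProduct_smul, ortho_v i j, smul_eq_mul]
  have dAB : ∀ i j, star (A *ᵥ v i) ⬝ᵥ (B *ᵥ v j) = 0 := by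
    intro i j; rw [dp_aux, h2, zero_mulVec, dotProduct_zero]
  have dBA : ∀ i j, star (B *ᵥ v i) ⬝ᵥ (A *ᵥ v j) = 0 := by
    intro i j
    have h2' : Bᴴ * A = 0 := by
      have := congrArg conjTranspose h2; simpa using this
    rw [dp_aux, h2', zero_mulVec, dotProduct_zero]
  have hAv0 : ∀ j, a j = 0 → A *ᵥ v j = 0 := by
    intro j hj
    have := dAA j j
    rw [hj, if_pos rfl] at this
    simpa using dotProduct_star_self_eq_zero.mp (by simpa using this)
  have hBv0 : ∀ j, b j = 0 → B *ᵥ v j = 0 := by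
    intro j hj
    have := dBB j j
    rw [hj, if_pos rfl] at this
    simpa using dotProduct_star_self_eq_zero.mp (by simpa using this)
  -- the orthonormal family
  set uf : Fin n → Fin n → ℂ := fun j =>
    if a j ≠ 0 then ((a j : ℂ))⁻¹ • (A *ᵥ v j) else ((b j : ℂ))⁻¹ • (B *ᵥ v j) with huf
  set u : Fin n → EuclideanSpace ℂ (Fin n) := fun j => (WithLp.equiv 2 _).symm (uf j) with hu
  set s : Set (Fin n) := {j | a j ≠ 0 ∨ b j ≠ 0} with hs
  have hON : Orthonormal ℂ (s.restrict u) := by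
    rw [orthonormal_iff_ite]
    rintro ⟨i, hi⟩ ⟨j, hj⟩
    rw [EuclideanSpace.inner_eq_star_dotProduct, dotProduct_comm]
    simp only [Set.restrict, Set.domRestrict_apply, hu, Equiv.apply_symm_apply, Subtype.mk.injEq,
      WithLp.equiv_symm_apply, WithLp.ofLp_toLp]
    by_cases hai : a i ≠ 0 <;> by_cases haj : a j ≠ 0
    · rw [huf]
      simp only [if_pos hai, if_pos haj]
      rw [star_smul, smul_dotProduct, dotProduct_smul, dAA i j]
      by_cases hij : i = j
      · subst hij
        simp only [if_pos rfl, smul_eq_mul, mul_one, star_inv₀, RCLike.star_def,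
          Complex.conj_ofReal]
        have hC : ((a i : ℝ) : ℂ) ≠ 0 := Complex.ofReal_ne_zero.mpr hai
        push_cast
        field_simp
        try ring
      · simp [if_neg hij]
    · -- a i ≠ 0, a j = 0, so b j ≠ 0; cross term 0, i ≠ j
      push_neg at haj
      have hbj : b j ≠ 0 := hj.resolve_left (not_not_intro haj)
      have hij : ¬ (i = j) := fun h => hai (h ▸ haj)
      rw [huf]
      simp only [if_pos hai, if_neg (not_not_intro haj), if_neg hij]
      rw [star_smul, smul_dotProduct, dotProduct_smul, dAB i j]
      simp
    · push_neg at hai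
      have hbi : b i ≠ 0 := hi.resolve_left (not_not_intro hai)
      have hij : ¬ (i = j) := fun h => haj (h ▸ hai)
      rw [huf]
      simp only [if_neg (not_not_intro hai), if_pos haj, if_neg hij]
      rw [star_smul, smul_dotProduct, dotProduct_smul, dBA i j]
      simp
    · push_neg at hai haj
      have hbi : b i ≠ 0 := hi.resolve_left (not_not_intro hai)
      have hbj : b j ≠ 0 := hj.resolve_left (not_not_intro haj)
      rw [huf]
      simp only [if_neg (not_not_intro hai), if_neg (not_not_intro haj)]
      rw [star_smul, smul_dotProduct, dotProduct_smul, dBB i j]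
      by_cases hij : i = j
      · subst hij
        simp only [if_pos rfl, smul_eq_mul, mul_one, star_inv₀, RCLike.star_def,
          Complex.conj_ofReal]
        have hC : ((b i : ℝ) : ℂ) ≠ 0 := Complex.ofReal_ne_zero.mpr hbi
        push_cast
        field_simp
        try ring
      · simp [if_neg hij]
  obtain ⟨f, hf⟩ := hON.exists_orthonormalBasis_extension_of_card_eq (by simp)
  have innerf : ∀ i j, star ((WithLp.equiv 2 _) (f i)) ⬝ᵥ ((WithLp.equiv 2 _) (f j))
      = if i = j then 1 else 0 := by
    intro i j
    have := orthonormal_iff_ite.mp f.orthonormal i j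
    rwa [EuclideanSpace.inner_eq_star_dotProduct, dotProduct_comm] at this
  have hAvf : ∀ j, A *ᵥ v j = (a j : ℂ) • (WithLp.equiv 2 _) (f j) := by
    intro j
    by_cases haj : a j = 0
    · rw [hAv0 j haj, haj]; simp
    · have hjs : j ∈ s := Or.inl haj
      rw [hf j hjs, hu]
      simp only [Equiv.apply_symm_apply, huf, if_pos haj]
      rw [smul_smul, mul_inv_cancel₀ (by exact_mod_cast haj), one_smul]
  have hBvf : ∀ j, B *ᵥ v j = (b j : ℂ) • (WithLp.equiv 2 _) (f j) := by
    intro j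
    by_cases hbj : b j = 0
    · rw [hBv0 j hbj, hbj]; simp
    · have haj : a j = 0 := by
        rcases mul_eq_zero.mp (hab j) with h | h
        · exact h
        · exact absurd h hbj
      have hjs : j ∈ s := Or.inr hbj
      rw [hf j hjs, hu]
      simp only [Equiv.apply_symm_apply, huf, if_neg (not_not_intro haj)]
      rw [smul_smul, mul_inv_cancel₀ (by exact_mod_cast hbj), one_smul]
  -- matrices
  set W : Matrix (Fin n) (Fin n) ℂ :=
    (EuclideanSpace.basisFun (Fin n) ℂ).toBasis.toMatrix f.toBasis with hW
  have hWu : star W ∈ Matrix.unitaryGroup (Fin n) ℂ :=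
    Unitary.star_mem ((EuclideanSpace.basisFun (Fin n) ℂ).toMatrix_orthonormalBasis_mem_unitary f)
  set V : Matrix (Fin n) (Fin n) ℂ :=
    (Matrix.IsHermitian.eigenvectorUnitary hM : Matrix (Fin n) (Fin n) ℂ) with hV
  have hVu : V ∈ Matrix.unitaryGroup (Fin n) ℂ := (Matrix.IsHermitian.eigenvectorUnitary hM).2
  have key : ∀ (C : Matrix (Fin n) (Fin n) ℂ) (i j : Fin n),
      (star W * C * V) i j = star ((WithLp.equiv 2 _) (f i)) ⬝ᵥ (C *ᵥ v j) := by
    intro C i j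
    rw [hW, hV, Matrix.mul_assoc]
    rfl
  refine ⟨star W, hWu, V, hVu, a, b, ha0, hb0, hab, ?_, ?_⟩
  · ext i j
    rw [key A i j, hAvf j, dotProduct_smul, innerf i j]
    by_cases hij : i = j
    · subst hij; simp [Matrix.diagonal_apply]
    · simp [Matrix.diagonal_apply, hij]
  · ext i j
    rw [key B i j, hBvf j, dotProduct_smul, innerf i j]
    by_cases hij : i = j
    · subst hij; simp [Matrix.diagonal_apply]
    · simp [Matrix.diagonal_apply, hij]

end Aux
/-- A B* = A* B = 0 iff A and B are simultaneously "diagonalizable" by unitaries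
into nonnegative diagonal matrices with disjoint supports. -/
theorem orthogonal_iff_simultaneous_diagonal (n : ℕ)
    (A B : Matrix (Fin n) (Fin n) ℂ) :
    (A * Bᴴ = 0 ∧ Aᴴ * B = 0) ↔
      ∃ U ∈ Matrix.unitaryGroup (Fin n) ℂ, ∃ V ∈ Matrix.unitaryGroup (Fin n) ℂ,
        ∃ a b : Fin n → ℝ,
          (∀ i, 0 ≤ a i) ∧ (∀ i, 0 ≤ b i) ∧ (∀ i, a i * b i = 0) ∧
          U * A * V = Matrix.diagonal (fun i => (a i : ℂ)) ∧
          U * B * V = Matrix.diagonal (fun i => (b i : ℂ)) := by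
  constructor
  · rintro ⟨h1, h2⟩
    have hM : (Aᴴ * A - Bᴴ * B).IsHermitian :=
      ((Matrix.isHermitian_conjTranspose_mul_self A).sub (Matrix.isHermitian_conjTranspose_mul_self B))
    exact aux_forward A B h1 h2 hM (aux_eigen_split A B h1 h2 hM)
  · rintro ⟨U, hU, V, hV, a, b, _, _, hab, hA, hB⟩
    have hUs : star U * U = 1 := Matrix.mem_unitaryGroup_iff'.mp hU
    have hUss : U * star U = 1 := Matrix.mem_unitaryGroup_iff.mp hU
    have hVs : star V * V = 1 := Matrix.mem_unitaryGroup_iff'.mp hV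
    have hVss : V * star V = 1 := Matrix.mem_unitaryGroup_iff.mp hV
    have hDD : Matrix.diagonal (fun i => (a i : ℂ)) * Matrix.diagonal (fun i => (b i : ℂ))
        = 0 := by
      rw [Matrix.diagonal_mul_diagonal]
      have : (fun i => (a i : ℂ) * (b i : ℂ)) = fun _ => (0 : ℂ) := by
        funext i
        rw [← Complex.ofReal_mul, hab i, Complex.ofReal_zero]
      rw [this, Matrix.diagonal_zero]
    have hAeq : A = star U * Matrix.diagonal (fun i => (a i : ℂ)) * star V := by
      rw [← hA]
      calc A = (star U * U) * A * (V * star V) := by rw [hUs, hVss, Matrix.one_mul, Matrix.mul_one]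
      _ = star U * (U * A * V) * star V := by simp only [Matrix.mul_assoc]
    have hBeq : B = star U * Matrix.diagonal (fun i => (b i : ℂ)) * star V := by
      rw [← hB]
      calc B = (star U * U) * B * (V * star V) := by rw [hUs, hVss, Matrix.one_mul, Matrix.mul_one]
      _ = star U * (U * B * V) * star V := by simp only [Matrix.mul_assoc]
    have hDiagStarA :
        star (Matrix.diagonal (fun i => (a i : ℂ))) = Matrix.diagonal (fun i => (a i : ℂ)) := by
      ext i j
      rw [Matrix.star_apply, Matrix.diagonal_apply, Matrix.diagonal_apply]
      by_cases hij : i = j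
      · subst hij
        simp [Complex.conj_ofReal]
      · rw [if_neg hij, if_neg (fun h => hij h.symm), star_zero]
    have hDiagStarB :
        star (Matrix.diagonal (fun i => (b i : ℂ))) = Matrix.diagonal (fun i => (b i : ℂ)) := by
      ext i j
      rw [Matrix.star_apply, Matrix.diagonal_apply, Matrix.diagonal_apply]
      by_cases hij : i = j
      · subst hij
        simp [Complex.conj_ofReal]
      · rw [if_neg hij, if_neg (fun h => hij h.symm), star_zero]
    have hBH : Bᴴ = V * Matrix.diagonal (fun i => (b i : ℂ)) * U := by
      rw [hBeq, ← Matrix.star_eq_conjTranspose]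
      simp only [StarMul.star_mul, star_star, hDiagStarB, Matrix.mul_assoc]
    have hAH : Aᴴ = V * Matrix.diagonal (fun i => (a i : ℂ)) * U := by
      rw [hAeq, ← Matrix.star_eq_conjTranspose]
      simp only [StarMul.star_mul, star_star, hDiagStarA, Matrix.mul_assoc]
    constructor
    · rw [hAeq, hBH]
      calc (star U * Matrix.diagonal (fun i => (a i : ℂ)) * star V)
            * (V * Matrix.diagonal (fun i => (b i : ℂ)) * U)
          = star U * (Matrix.diagonal (fun i => (a i : ℂ)) * ((star V * V)
            * (Matrix.diagonal (fun i => (b i : ℂ)) * U))) := by simp only [Matrix.mul_assoc]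
        _ = star U * ((Matrix.diagonal (fun i => (a i : ℂ))
            * Matrix.diagonal (fun i => (b i : ℂ))) * U) := by
            rw [hVs, Matrix.one_mul, Matrix.mul_assoc]
        _ = 0 := by rw [hDD, Matrix.zero_mul, Matrix.mul_zero]
    · rw [hAH, hBeq]
      calc (V * Matrix.diagonal (fun i => (a i : ℂ)) * U)
            * (star U * Matrix.diagonal (fun i => (b i : ℂ)) * star V)
          = V * (Matrix.diagonal (fun i => (a i : ℂ)) * ((U * star U)
            * (Matrix.diagonal (fun i => (b i : ℂ)) * star V))) := by simp only [Matrix.mul_assoc]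
        _ = V * ((Matrix.diagonal (fun i => (a i : ℂ))
            * Matrix.diagonal (fun i => (b i : ℂ))) * star V) := by
            rw [hUss, Matrix.one_mul, Matrix.mul_assoc]
        _ = 0 := by rw [hDD, Matrix.zero_mul, Matrix.mul_zero]
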